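/- arXiv:2108.00157 — 5 statements merged into one kernel-verified Lean document; each statement's English description precedes it below -/
import Mathlib

section
/- Let b, c : ℕ → ℍ be sequences of quaternions and q ∈ ℍ with Σ_n |b_n||q|^n < ∞ and Σ_n |c_n||q|^n < ∞. If F_b(q) ≠ 0, then F_{b⋆c}(q) = F_b(q) · F_c(F_b(q)⁻¹ q F_b(q)); if F_b(q) = 0, then F_{b⋆c}(q) = 0. -/
noncomputable section

local notation "ℍ" => Quaternion ℝ

/-- The power series function `F_c(q) = Σ_n q^n c_n` associated to a coefficient
sequence `c : ℕ → ℍ`. -/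
def Fc (c : ℕ → ℍ) (q : ℍ) : ℍ := ∑' n, q ^ n * c n

/-- Cauchy product `(b ⋆ c)_n = Σ_{k=0}^n b_k c_{n-k}` of coefficient sequences,
i.e. the coefficient sequence of the slice `*`-product. -/
def cprod (b c : ℕ → ℍ) : ℕ → ℍ := fun n => ∑ k ∈ Finset.range (n + 1), b k * c (n - k)

/-- Coefficient sequence `ε(a)_n = √(1-|a|²) conj(a)^n` of the slice normalized
Szegő kernel `e_a`. -/
def eps (a : ℍ) : ℕ → ℍ := fun n => Real.sqrt (1 - ‖a‖ ^ 2) • (star a) ^ n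

open scoped Classical in
/-- Coefficient sequence `β(a)` of the slice Blaschke factor `B_a`:
`β(a)_0 = a²/|a|`, `β(a)_n = -conj(a)^{n-1}(1-|a|²)(a/|a|)` for `n ≥ 1`,
with the convention `β(0)_n = 1` iff `n = 1` (that is, `B_0(q) = q`). -/
def betaC (a : ℍ) : ℕ → ℍ :=
  if a = 0 then fun n => if n = 1 then 1 else 0
  else fun n =>
    if n = 0 then a ^ 2 / (‖a‖ : ℍ)
    else -((star a) ^ (n - 1) * ((1 - ‖a‖ ^ 2 : ℝ) : ℍ) * (a / (‖a‖ : ℍ)))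

/-- The identity for the Cauchy product: coefficient sequence of the constant `1`. -/
def deltaSeq : ℕ → ℍ := fun n => if n = 0 then 1 else 0

/-- Coefficient sequence of the Blaschke product `B_{a_0} * ⋯ * B_{a_{k-1}}`
(0-indexed; `Bprod a 0` is the empty product, i.e. the constant `1`). -/
def Bprod (a : ℕ → ℍ) : ℕ → (ℕ → ℍ)
  | 0 => deltaSeq
  | k + 1 => cprod (Bprod a k) (betaC (a k))

/-- Coefficient sequence of the `k`-th slice Takenaka–Malmquist function
`T_{k+1} = B_{a_0} * ⋯ * B_{a_{k-1}} * e_{a_k}` (0-indexed). -/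
def tau (a : ℕ → ℍ) (k : ℕ) : ℕ → ℍ := cprod (Bprod a k) (eps (a k))

/-- `e^{It} = cos t + I sin t`. -/
def expI (I : ℍ) (t : ℝ) : ℍ := ((Real.cos t : ℝ) : ℍ) + ((Real.sin t : ℝ) : ℍ) * I

private lemma conj_pow_aux (a q : ℍ) (ha : a ≠ 0) (m : ℕ) :
    (a⁻¹ * q * a) ^ m = a⁻¹ * q ^ m * a := by
  induction m with
  | zero => simp [inv_mul_cancel₀ ha]
  | succ m ih =>
    rw [pow_succ, ih, pow_succ]
    simp [mul_assoc, mul_inv_cancel_left₀ ha]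

private lemma summable_F (b c : ℕ → ℍ) (q : ℍ)
    (hb : Summable fun n => ‖b n‖ * ‖q‖ ^ n)
    (hc : Summable fun n => ‖c n‖ * ‖q‖ ^ n) :
    Summable fun p : ℕ × ℕ => q ^ (p.1 + p.2) * b p.1 * c p.2 := by
  apply Summable.of_norm
  have h := hb.mul_of_nonneg hc
    (fun n => mul_nonneg (norm_nonneg _) (pow_nonneg (norm_nonneg _) _))
    (fun n => mul_nonneg (norm_nonneg _) (pow_nonneg (norm_nonneg _) _))
  convert h using 2 with p
  simp only [norm_mul, norm_pow, pow_add]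
  ring

set_option maxHeartbeats 1000000 in
private lemma key (b c : ℕ → ℍ) (q : ℍ)
    (hb : Summable fun n => ‖b n‖ * ‖q‖ ^ n)
    (hc : Summable fun n => ‖c n‖ * ‖q‖ ^ n) :
    Fc (cprod b c) q = ∑' m, q ^ m * Fc b q * c m := by
  set F : ℕ × ℕ → ℍ := fun p => q ^ (p.1 + p.2) * b p.1 * c p.2 with hFdef
  have hF : Summable F := summable_F b c q hb hc
  -- first: Fc (cprod b c) q = ∑' p, F p
  have h1 : Fc (cprod b c) q = ∑' p : ℕ × ℕ, F p := by
    rw [← Finset.HasAntidiagonal.sigmaAntidiagonalEquivProd.tsum_eq F]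
    rw [Summable.tsum_sigma' (f := fun x : Σ n : ℕ, {p // p ∈ Finset.HasAntidiagonal.antidiagonal n} =>
        F (Finset.HasAntidiagonal.sigmaAntidiagonalEquivProd x))
      (fun n => (hasSum_fintype _).summable)
      (by exact Finset.HasAntidiagonal.sigmaAntidiagonalEquivProd.summable_iff.mpr hF)]
    unfold Fc
    congr 1
    funext n
    rw [tsum_fintype]
    have hss : ∑ i : {p // p ∈ Finset.HasAntidiagonal.antidiagonal n},
        F (Finset.HasAntidiagonal.sigmaAntidiagonalEquivProd ⟨n, i⟩)
        = ∑ kl ∈ Finset.HasAntidiagonal.antidiagonal n, F kl := by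
      rw [← Finset.sum_coe_sort (Finset.HasAntidiagonal.antidiagonal n) F]
      rfl
    rw [hss, Finset.Nat.sum_antidiagonal_eq_sum_range_succ (fun k l => F (k, l))]
    rw [cprod, Finset.mul_sum]
    apply Finset.sum_congr rfl
    intro k hk
    have hkn : k ≤ n := Nat.lt_succ_iff.mp (Finset.mem_range.mp hk)
    show q ^ n * (b k * c (n - k)) = q ^ (k + (n - k)) * b k * c (n - k)
    rw [Nat.add_sub_cancel' hkn, mul_assoc]
  -- second: ∑' p, F p = ∑' m, q^m * Fc b q * c m
  have h2 : ∑' p : ℕ × ℕ, F p = ∑' m, q ^ m * Fc b q * c m := by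
    have hswap : Summable fun p : ℕ × ℕ => F p.swap := hF.prod_symm
    have := (Equiv.prodComm ℕ ℕ).tsum_eq F
    rw [← this]
    rw [Summable.tsum_prod' (f := fun p : ℕ × ℕ => F ((Equiv.prodComm ℕ ℕ) p))
      (by exact hswap) (fun m => by exact hswap.prod_factor m)]
    congr 1
    funext m
    have : ∀ k, F ((Equiv.prodComm ℕ ℕ) (m, k)) = q ^ m * (q ^ k * b k) * c m := by
      intro k
      show q ^ (k + m) * b k * c m = q ^ m * (q ^ k * b k) * c m
      rw [add_comm, pow_add, mul_assoc (q ^ m) (q ^ k) (b k)]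
    simp only [this]
    rw [tsum_mul_right, tsum_mul_left]
    rfl
  rw [h1, h2]

/-- the `*`-product formula `(f*g)(q) = f(q) g(f(q)⁻¹ q f(q))` when
`f(q) ≠ 0`, and `(f*g)(q) = 0` when `f(q) = 0`; here `f = F_b`, `g = F_c`. -/
theorem starProduct_eval (b c : ℕ → ℍ) (q : ℍ)
    (hb : Summable fun n => ‖b n‖ * ‖q‖ ^ n)
    (hc : Summable fun n => ‖c n‖ * ‖q‖ ^ n) :
    (Fc b q ≠ 0 →
      Fc (cprod b c) q = Fc b q * Fc c ((Fc b q)⁻¹ * q * Fc b q)) ∧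
    (Fc b q = 0 → Fc (cprod b c) q = 0) := by
  constructor
  · intro h0
    rw [key b c q hb hc]
    have hpow : ∀ m : ℕ, q ^ m * Fc b q = Fc b q * ((Fc b q)⁻¹ * q * Fc b q) ^ m := by
      intro m
      rw [conj_pow_aux _ _ h0, ← mul_assoc, ← mul_assoc, mul_inv_cancel₀ h0, one_mul]
    have : ∀ m : ℕ, q ^ m * Fc b q * c m
        = Fc b q * (((Fc b q)⁻¹ * q * Fc b q) ^ m * c m) := by
      intro m; rw [hpow m, mul_assoc]
    simp only [this]
    rw [tsum_mul_left]
    rfl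
  · intro h0
    rw [key b c q hb hc, h0]
    simp
end
end

section
/- (Slice Cauchy formula.) Let c : ℕ → ℍ and r > 0 with Σ_n |c_n| r^n < ∞. Then for every q ∈ ℍ with |q| < r and every I ∈ 𝕊, the quaternion q² − 2r cos(t) q + r² is invertible for every t, and F_c(q) = (1/2π) ∫₀^{2π} (q² − 2 r cos(t) q + r²)⁻¹ (r e^{−It} − q) · r e^{It} · F_c(r e^{It}) dt. -/
noncomputable section

local notation "ℍ" => Quaternion ℝ

namespace SliceAux

variable {I : ℍ}

lemma expI_eq (t : ℝ) : expI I t = Real.cos t • (1:ℍ) + Real.sin t • I := by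
  simp [expI, Quaternion.coe_mul_eq_smul, ← Quaternion.coe_mul_eq_smul]

lemma expI_mul (hI : I ^ 2 = -1) (t u : ℝ) : expI I t * expI I u = expI I (t + u) := by
  have h2 : I * I = -1 := by rw [← pow_two]; exact hI
  simp only [expI_eq, add_mul, mul_add, smul_mul_smul_comm, mul_one, one_mul, h2,
    Real.cos_add, Real.sin_add]
  module

lemma expI_zero : expI I 0 = 1 := by simp [expI]

lemma re_of_sq_neg_one (hI : I ^ 2 = -1) : I.re = 0 := by
  by_contra h
  have h0 := congrArg QuaternionAlgebra.re hI
  have h1 := congrArg QuaternionAlgebra.imI hI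
  have h2 := congrArg QuaternionAlgebra.imJ hI
  have h3 := congrArg QuaternionAlgebra.imK hI
  simp only [pow_two, Quaternion.re_mul, Quaternion.imI_mul, Quaternion.imJ_mul,
    Quaternion.imK_mul, Quaternion.re_neg, Quaternion.imI_neg, Quaternion.imJ_neg,
    Quaternion.imK_neg, Quaternion.re_one, Quaternion.imI_one, Quaternion.imJ_one,
    Quaternion.imK_one, neg_zero] at h0 h1 h2 h3
  have e1 : I.imI = 0 := by
    rcases mul_eq_zero.1 (show I.re * I.imI = 0 by linarith) with h'|h' <;> [exact absurd h' h; exact h']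
  have e2 : I.imJ = 0 := by
    rcases mul_eq_zero.1 (show I.re * I.imJ = 0 by nlinarith) with h'|h' <;> [exact absurd h' h; exact h']
  have e3 : I.imK = 0 := by
    rcases mul_eq_zero.1 (show I.re * I.imK = 0 by nlinarith) with h'|h' <;> [exact absurd h' h; exact h']
  rw [e1, e2, e3] at h0
  nlinarith [sq_nonneg I.re]

lemma norm_expI (hI : I ^ 2 = -1) (t : ℝ) : ‖expI I t‖ = 1 := by
  have hre : I.re = 0 := re_of_sq_neg_one hI
  have h0 := congrArg QuaternionAlgebra.re hI
  simp only [pow_two, Quaternion.re_mul, Quaternion.re_neg, Quaternion.re_one, hre,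
    mul_zero, zero_mul, zero_sub] at h0
  have hns : Quaternion.normSq (expI I t) = 1 := by
    rw [Quaternion.normSq_def']
    simp only [expI, Quaternion.re_add, Quaternion.imI_add, Quaternion.imJ_add,
      Quaternion.imK_add, Quaternion.re_coe, Quaternion.imI_coe, Quaternion.imJ_coe,
      Quaternion.imK_coe, Quaternion.re_mul, Quaternion.imI_mul, Quaternion.imJ_mul,
      Quaternion.imK_mul, Quaternion.re_coe, hre]
    ring_nf
    nlinarith [Real.sin_sq_add_cos_sq t]
  have := Quaternion.normSq_eq_norm_mul_self (a := expI I t)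
  rw [hns] at this
  nlinarith [norm_nonneg (expI I t), this.symm]

/-- combine two `coe * expI` factors. -/
lemma mul_mul (hI : I ^ 2 = -1) (x y a b : ℝ) :
    ((x : ℍ) * expI I a) * ((y : ℍ) * expI I b) = ((x * y : ℝ) : ℍ) * expI I (a + b) := by
  have h : expI I a * (y:ℍ) = (y:ℍ) * expI I a := (Quaternion.coe_commutes _ _).symm
  calc ((x : ℍ) * expI I a) * ((y : ℍ) * expI I b)
      = (x:ℍ) * ((expI I a * (y:ℍ)) * expI I b) := by noncomm_ring
    _ = (x:ℍ) * (((y:ℍ) * expI I a) * expI I b) := by rw [h]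
    _ = ((x:ℍ) * (y:ℍ)) * (expI I a * expI I b) := by noncomm_ring
    _ = ((x*y : ℝ) : ℍ) * expI I (a + b) := by rw [expI_mul hI, Quaternion.coe_mul]

lemma pow_coe_expI (hI : I ^ 2 = -1) (x : ℝ) (a : ℝ) (k : ℕ) :
    ((x : ℍ) * expI I a) ^ k = ((x ^ k : ℝ) : ℍ) * expI I (k * a) := by
  induction k with
  | zero => simp [expI_zero]
  | succ k ih =>
      rw [pow_succ, ih, mul_mul hI, ← pow_succ]
      push_cast
      ring_nf

/-- The key algebraic identity. -/
lemma key_alg (q A S Sb : ℍ) (h1 : A * S = 1 + q * A)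
    (hc1 : ∀ a : ℍ, (S + Sb) * a = a * (S + Sb))
    (hc2 : ∀ a : ℍ, (Sb * S) * a = a * (Sb * S)) (hc3 : S * Sb = Sb * S) :
    (q ^ 2 - (S + Sb) * q + Sb * S) * A = Sb - q := by
  have k1 : q * A = A * S - 1 := by rw [h1]; abel
  calc (q ^ 2 - (S + Sb) * q + Sb * S) * A
      = q * (q * A) - (S + Sb) * (q * A) + (Sb * S) * A := by noncomm_ring
    _ = q * (A * S - 1) - (A * S - 1) * (S + Sb) + A * (Sb * S) := by rw [k1, hc1, hc2]
    _ = (q * A) * S - q - (A * S - 1) * (S + Sb) + A * (Sb * S) := by noncomm_ring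
    _ = (A * S - 1) * S - q - (A * S - 1) * (S + Sb) + A * (Sb * S) := by rw [k1]
    _ = Sb - q := by
        rw [show (A * S - 1) * (S + Sb) = A * (S * Sb) + (A * S) * S - S - Sb by noncomm_ring,
          hc3]
        noncomm_ring

end SliceAux

set_option maxHeartbeats 2000000 in
open SliceAux MeasureTheory in
/-- the slice regular Cauchy formula on a circle of radius `r`. -/
theorem slice_cauchy_formula (c : ℕ → ℍ) (r : ℝ) (hr : 0 < r)
    (hc : Summable fun n => ‖c n‖ * r ^ n)
    (q : ℍ) (hq : ‖q‖ < r) (I : ℍ) (hI : I ^ 2 = -1) :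
    (∀ t : ℝ, IsUnit (q ^ 2 - ((2 * r * Real.cos t : ℝ) : ℍ) * q + ((r ^ 2 : ℝ) : ℍ))) ∧
    Fc c q = (2 * Real.pi)⁻¹ •
      ∫ t in (0 : ℝ)..(2 * Real.pi),
        (q ^ 2 - ((2 * r * Real.cos t : ℝ) : ℍ) * q + ((r ^ 2 : ℝ) : ℍ))⁻¹ *
          ((r : ℍ) * expI I (-t) - q) * ((r : ℍ) * expI I t) *
          Fc c ((r : ℍ) * expI I t) := by
  have hrne : r ≠ 0 := ne_of_gt hr
  set T : ℝ := 2 * Real.pi with hTdef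
  have hT0 : (0:ℝ) ≤ T := by positivity
  set S : ℝ → ℍ := fun t => (r : ℍ) * expI I t with hSdef
  set Sb : ℝ → ℍ := fun t => (r : ℍ) * expI I (-t) with hSbdef
  set W : ℝ → ℍ := fun t => ((r⁻¹ : ℝ) : ℍ) * expI I (-t) with hWdef
  set P : ℝ → ℍ := fun t =>
    q ^ 2 - ((2 * r * Real.cos t : ℝ) : ℍ) * q + ((r ^ 2 : ℝ) : ℍ) with hPdef
  -- geometric data
  have hratio : ‖q‖ * r⁻¹ < 1 := by
    rw [← div_eq_mul_inv, div_lt_one hr]; exact hq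
  have hratio0 : 0 ≤ ‖q‖ * r⁻¹ := mul_nonneg (norm_nonneg q) (inv_nonneg.2 hr.le)
  have hgeo : Summable fun n : ℕ => (‖q‖ * r⁻¹) ^ n :=
    summable_geometric_of_lt_one hratio0 hratio
  -- norms
  have hnormS : ∀ u : ℝ, ‖(r : ℍ) * expI I u‖ = r := by
    intro u
    rw [norm_mul, Quaternion.norm_coe, norm_expI hI, Real.norm_eq_abs, abs_of_pos hr, mul_one]
  have hnormW : ∀ u : ℝ, ‖((r⁻¹ : ℝ) : ℍ) * expI I u‖ = r⁻¹ := by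
    intro u
    rw [norm_mul, Quaternion.norm_coe, norm_expI hI, Real.norm_eq_abs,
      abs_of_pos (inv_pos.2 hr), mul_one]
  have hWS : ∀ t, W t * S t = 1 := by
    intro t
    rw [hWdef, hSdef]
    simp only
    rw [mul_mul hI, inv_mul_cancel₀ hrne, neg_add_cancel, expI_zero, Quaternion.coe_one, mul_one]
  -- summability of the building blocks
  have hsm0n : ∀ t, Summable fun n : ℕ => ‖q ^ n * W t ^ n‖ := by
    intro t
    refine hgeo.congr fun n => ?_
    rw [mul_pow, norm_mul, norm_pow, norm_pow, hnormW]
  have hsm0 : ∀ t, Summable fun n : ℕ => q ^ n * W t ^ n := fun t => (hsm0n t).of_norm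
  have hsm1 : ∀ t, Summable fun n : ℕ => q ^ n * W t ^ (n + 1) := by
    intro t
    refine Summable.of_norm ((hgeo.mul_right r⁻¹).congr fun n => ?_)
    rw [norm_mul, norm_pow, norm_pow, hnormW, mul_pow, pow_succ, mul_assoc]
  set G : ℝ → ℍ := fun t => ∑' n : ℕ, q ^ n * W t ^ (n + 1) with hGdef
  have hGS : ∀ t, G t * S t = ∑' n : ℕ, q ^ n * W t ^ n := by
    intro t
    rw [hGdef]
    simp only
    rw [← tsum_mul_right]
    exact tsum_congr fun n => by rw [pow_succ, mul_assoc, mul_assoc, hWS t, mul_one]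
  have hqG : ∀ t, q * G t = ∑' n : ℕ, q ^ (n + 1) * W t ^ (n + 1) := by
    intro t
    rw [hGdef]
    simp only
    rw [← tsum_mul_left]
    exact tsum_congr fun n => by rw [← mul_assoc, ← pow_succ']
  have hGS1 : ∀ t, G t * S t = 1 + q * G t := by
    intro t
    rw [hGS t, (hsm0 t).tsum_eq_zero_add, hqG t]
    simp
  -- central identifications
  have hcoe2 : ∀ t, ((2 * r * Real.cos t : ℝ) : ℍ) = S t + Sb t := by
    intro t
    rw [hSdef, hSbdef]
    simp only [expI_eq, Real.cos_neg, Real.sin_neg, Quaternion.coe_mul_eq_smul]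
    rw [show ((2 * r * Real.cos t : ℝ) : ℍ) = (2 * r * Real.cos t) • (1:ℍ) by
      rw [← Quaternion.coe_mul_eq_smul, mul_one]]
    module
  have hcoer2 : ∀ t, ((r ^ 2 : ℝ) : ℍ) = Sb t * S t := by
    intro t
    rw [hSdef, hSbdef]
    simp only
    rw [mul_mul hI, neg_add_cancel, expI_zero, mul_one]
    norm_num [pow_two]
  have hSSb : ∀ t, S t * Sb t = Sb t * S t := by
    intro t
    rw [hSdef, hSbdef]
    simp only
    rw [mul_mul hI, mul_mul hI, add_neg_cancel, neg_add_cancel]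
  have halg : ∀ t, P t * G t = Sb t - q := by
    intro t
    have hc1 : ∀ a : ℍ, (S t + Sb t) * a = a * (S t + Sb t) := by
      intro a; rw [← hcoe2 t]; exact Quaternion.coe_commutes _ _
    have hc2 : ∀ a : ℍ, (Sb t * S t) * a = a * (Sb t * S t) := by
      intro a; rw [← hcoer2 t]; exact Quaternion.coe_commutes _ _
    have hk := key_alg q (G t) (S t) (Sb t) (hGS1 t) hc1 hc2 (hSSb t)
    rw [hPdef]
    simp only
    rw [hcoe2 t, hcoer2 t]
    exact hk
  have hSbq : ∀ t, Sb t - q ≠ 0 := by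
    intro t h
    have : Sb t = q := by rwa [sub_eq_zero] at h
    have : ‖q‖ = r := by rw [← this]; exact hnormS (-t)
    exact absurd hq (by rw [this]; exact lt_irrefl r)
  have hPne : ∀ t, P t ≠ 0 := fun t h => hSbq t (by rw [← halg t, h, zero_mul])
  refine ⟨fun t => isUnit_iff_ne_zero.2 (hPne t), ?_⟩
  have hKey : ∀ t, (P t)⁻¹ * (Sb t - q) = G t := by
    intro t
    rw [← halg t, ← mul_assoc, inv_mul_cancel₀ (hPne t), one_mul]
  -- summability of the boundary series
  have hcm : ∀ t, Summable fun m : ℕ => ‖S t ^ m * c m‖ := by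
    intro t
    refine (hc.congr fun m => ?_)
    rw [norm_mul, norm_pow, hnormS t, mul_comm]
  -- the pointwise integrand expansion
  set Fz : ℕ × ℕ → ℝ → ℍ := fun z t => q ^ z.1 * W t ^ z.1 * (S t ^ z.2 * c z.2) with hFzdef
  have hIntegrand : ∀ t, (P t)⁻¹ * (Sb t - q) * S t * Fc c (S t) = ∑' z : ℕ × ℕ, Fz z t := by
    intro t
    rw [hKey t, mul_assoc, ← mul_assoc, hGS t]
    exact tsum_mul_tsum_of_summable_norm (hsm0n t) (hcm t)
  -- continuity facts
  have hce : Continuous fun u : ℝ => expI I u := by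
    unfold expI
    exact (Quaternion.continuous_coe.comp Real.continuous_cos).add
      ((Quaternion.continuous_coe.comp Real.continuous_sin).mul continuous_const)
  have hcontW : Continuous W := continuous_const.mul (hce.comp continuous_neg)
  have hcontS : Continuous S := continuous_const.mul hce
  have hcont : ∀ z : ℕ × ℕ, Continuous (Fz z) := by
    intro z
    exact (continuous_const.mul (hcontW.pow _)).mul ((hcontS.pow _).mul continuous_const)
  have hIntz : ∀ z : ℕ × ℕ, IntegrableOn (Fz z) (Set.Ioc 0 T) := fun z =>
    (hcont z).integrableOn_Ioc
  have hnormFz : ∀ (z : ℕ × ℕ) (t : ℝ),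
      ‖Fz z t‖ = (‖q‖ * r⁻¹) ^ z.1 * (r ^ z.2 * ‖c z.2‖) := by
    intro z t
    rw [hFzdef]
    simp only
    rw [norm_mul, norm_mul, norm_mul, norm_pow, norm_pow, norm_pow, hnormW, hnormS, mul_pow]
  have hsum_int : Summable fun z : ℕ × ℕ => ∫ t in Set.Ioc 0 T, ‖Fz z t‖ := by
    have he : (fun z : ℕ × ℕ => ∫ t in Set.Ioc 0 T, ‖Fz z t‖)
        = fun z => T * ((‖q‖ * r⁻¹) ^ z.1 * (r ^ z.2 * ‖c z.2‖)) := by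
      funext z
      simp only [hnormFz]
      rw [setIntegral_const, Real.volume_real_Ioc_of_le hT0, sub_zero, smul_eq_mul]
    rw [he]
    exact (Summable.mul_of_nonneg hgeo (hc.congr fun m => mul_comm _ _)
      (fun n => pow_nonneg hratio0 n)
      (fun m => mul_nonneg (pow_nonneg hr.le m) (norm_nonneg _))).mul_left T
  have hswap : (∫ t in Set.Ioc 0 T, ∑' z : ℕ × ℕ, Fz z t)
      = ∑' z : ℕ × ℕ, ∫ t in Set.Ioc 0 T, Fz z t :=
    (integral_tsum_of_summable_integral_norm hIntz hsum_int).symm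
  -- the individual integrals
  have hIz : ∀ z : ℕ × ℕ, (∫ t in Set.Ioc 0 T, Fz z t)
      = if z.1 = z.2 then T • (q ^ z.1 * c z.1) else 0 := by
    rintro ⟨n, m⟩
    set k : ℝ := (m : ℝ) - (n : ℝ) with hkdef
    have hFzeq : ∀ t, Fz (n, m) t
        = (q ^ n * ((r⁻¹ ^ n * r ^ m : ℝ) : ℍ)) * (expI I (k * t) * c m) := by
      intro t
      show q ^ n * (((r⁻¹ : ℝ) : ℍ) * expI I (-t)) ^ n
          * (((r : ℍ) * expI I t) ^ m * c m) = _
      rw [pow_coe_expI hI, pow_coe_expI hI]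
      calc q ^ n * (((r⁻¹ ^ n : ℝ) : ℍ) * expI I (n * -t))
            * ((((r ^ m : ℝ) : ℍ) * expI I (m * t)) * c m)
          = q ^ n * ((((r⁻¹ ^ n : ℝ) : ℍ) * expI I (n * -t))
            * (((r ^ m : ℝ) : ℍ) * expI I (m * t))) * c m := by noncomm_ring
        _ = q ^ n * (((r⁻¹ ^ n * r ^ m : ℝ) : ℍ) * expI I ((n : ℝ) * -t + m * t)) * c m := by
            rw [mul_mul hI]
        _ = (q ^ n * ((r⁻¹ ^ n * r ^ m : ℝ) : ℍ)) * (expI I (k * t) * c m) := by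
            rw [show (n : ℝ) * -t + m * t = k * t by rw [hkdef]; ring]
            noncomm_ring
    have hcos : (∫ t in Set.Ioc 0 T, Real.cos (k * t)) = if n = m then T else 0 := by
      rw [← intervalIntegral.integral_of_le hT0]
      by_cases hnm : n = m
      · subst hnm
        rw [if_pos rfl]
        simp [hkdef]
      · rw [if_neg hnm]
        have hk : k ≠ 0 := sub_ne_zero_of_ne (by exact_mod_cast (Ne.symm hnm))
        rw [intervalIntegral.integral_comp_mul_left Real.cos hk, integral_cos]
        have hkT : k * T = ((2 * ((m : ℤ) - (n : ℤ)) : ℤ) : ℝ) * Real.pi := by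
          rw [hkdef, hTdef]; push_cast; ring
        rw [mul_zero, hkT, Real.sin_int_mul_pi, Real.sin_zero, sub_zero, smul_zero]
    have hsin : (∫ t in Set.Ioc 0 T, Real.sin (k * t)) = 0 := by
      rw [← intervalIntegral.integral_of_le hT0]
      by_cases hnm : n = m
      · subst hnm
        simp [hkdef]
      · have hk : k ≠ 0 := sub_ne_zero_of_ne (by exact_mod_cast (Ne.symm hnm))
        rw [intervalIntegral.integral_comp_mul_left Real.sin hk, integral_sin]
        have hkT : k * T = (((m : ℤ) - (n : ℤ) : ℤ) : ℝ) * (2 * Real.pi) := by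
          rw [hkdef, hTdef]; push_cast; ring
        rw [mul_zero, hkT, Real.cos_int_mul_two_pi, Real.cos_zero, sub_self, smul_zero]
    have hexp : (∫ t in Set.Ioc 0 T, expI I (k * t)) = if n = m then T • (1 : ℍ) else 0 := by
      have h1 : Integrable (fun t => Real.cos (k * t) • (1 : ℍ))
          (volume.restrict (Set.Ioc 0 T)) :=
        ((Real.continuous_cos.comp (continuous_const.mul continuous_id)).integrableOn_Ioc).smul_const _
      have h2 : Integrable (fun t => Real.sin (k * t) • I) (volume.restrict (Set.Ioc 0 T)) :=
        ((Real.continuous_sin.comp (continuous_const.mul continuous_id)).integrableOn_Ioc).smul_const _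
      simp only [expI_eq]
      rw [integral_add h1 h2, integral_smul_const, integral_smul_const, hcos, hsin, zero_smul,
        add_zero]
      split_ifs with h
      · rfl
      · rw [zero_smul]
    have hIntExp : Integrable (fun t => expI I (k * t)) (volume.restrict (Set.Ioc 0 T)) :=
      (hce.comp (continuous_const.mul continuous_id)).integrableOn_Ioc
    set u : ℍ := q ^ n * ((r⁻¹ ^ n * r ^ m : ℝ) : ℍ) with hudef
    set L : ℍ →L[ℝ] ℍ :=
      (ContinuousLinearMap.mul ℝ ℍ u).comp ((ContinuousLinearMap.mul ℝ ℍ).flip (c m)) with hLdef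
    have hFzL : ∀ t, Fz (n, m) t = L (expI I (k * t)) := by
      intro t
      rw [hFzeq t, hLdef]
      simp [ContinuousLinearMap.mul_apply']
    calc (∫ t in Set.Ioc 0 T, Fz (n, m) t)
        = ∫ t in Set.Ioc 0 T, L (expI I (k * t)) := by simp only [hFzL]
      _ = L (∫ t in Set.Ioc 0 T, expI I (k * t)) := L.integral_comp_comm hIntExp
      _ = if n = m then T • (q ^ n * c n) else 0 := by
          rw [hexp]
          by_cases hnm : n = m
          · subst hnm
            rw [if_pos rfl, if_pos rfl, _root_.map_smul]
            congr 1
            rw [hLdef]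
            simp only [ContinuousLinearMap.comp_apply, ContinuousLinearMap.flip_apply,
              ContinuousLinearMap.mul_apply', one_mul]
            rw [hudef, ← mul_pow, inv_mul_cancel₀ hrne, one_pow, Quaternion.coe_one, mul_one]
          · rw [if_neg hnm, if_neg hnm, map_zero]
  -- collapse the double sum along the diagonal
  have hinj : Function.Injective (fun n : ℕ => ((n, n) : ℕ × ℕ)) := fun a b h =>
    (Prod.ext_iff.1 h).1
  have hsupp : Function.support
        (fun z : ℕ × ℕ => if z.1 = z.2 then T • (q ^ z.1 * c z.1) else 0)
      ⊆ Set.range (fun n : ℕ => ((n, n) : ℕ × ℕ)) := by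
    intro z hz
    by_cases h : z.1 = z.2
    · exact ⟨z.1, Prod.ext_iff.2 ⟨rfl, h⟩⟩
    · exact absurd (by simp [h]) hz
  have hdiag : (∑' z : ℕ × ℕ, if z.1 = z.2 then T • (q ^ z.1 * c z.1) else 0)
      = ∑' n : ℕ, T • (q ^ n * c n) := by
    rw [← hinj.tsum_eq hsupp]
    simp
  have hsumqc : Summable fun n : ℕ => q ^ n * c n := by
    refine Summable.of_norm (Summable.of_nonneg_of_le (fun n => norm_nonneg _) (fun n => ?_)
      (hc.congr fun n => mul_comm _ _))
    calc ‖q ^ n * c n‖ = ‖q‖ ^ n * ‖c n‖ := by rw [norm_mul, norm_pow]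
      _ ≤ r ^ n * ‖c n‖ :=
          mul_le_mul_of_nonneg_right (pow_le_pow_left₀ (norm_nonneg q) hq.le n) (norm_nonneg _)
  have hmain : (∫ t in (0:ℝ)..T, (P t)⁻¹ * (Sb t - q) * S t * Fc c (S t)) = T • Fc c q := by
    rw [intervalIntegral.integral_of_le hT0]
    calc (∫ t in Set.Ioc 0 T, (P t)⁻¹ * (Sb t - q) * S t * Fc c (S t))
        = ∫ t in Set.Ioc 0 T, ∑' z : ℕ × ℕ, Fz z t := by simp only [hIntegrand]
      _ = ∑' z : ℕ × ℕ, ∫ t in Set.Ioc 0 T, Fz z t := hswap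
      _ = ∑' z : ℕ × ℕ, if z.1 = z.2 then T • (q ^ z.1 * c z.1) else 0 := tsum_congr hIz
      _ = ∑' n : ℕ, T • (q ^ n * c n) := hdiag
      _ = T • ∑' n : ℕ, q ^ n * c n := hsumqc.tsum_const_smul T
      _ = T • Fc c q := rfl
  have hTne : T ≠ 0 := by rw [hTdef]; positivity
  rw [show (∫ t in (0:ℝ)..T,
        (q ^ 2 - ((2 * r * Real.cos t : ℝ) : ℍ) * q + ((r ^ 2 : ℝ) : ℍ))⁻¹ *
          ((r : ℍ) * expI I (-t) - q) * ((r : ℍ) * expI I t) *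
          Fc c ((r : ℍ) * expI I t)) = T • Fc c q from hmain,
    smul_smul, inv_mul_cancel₀ hTne, one_smul]
end
end

section
/- Let b, c : ℕ → ℍ with Σ_n |b_n| < ∞ and Σ_n |c_n| < ∞. Then for every I ∈ 𝕊: (1/2π) ∫₀^{2π} conj(F_b(e^{It})) · F_c(e^{It}) dt = Σ_n conj(b_n) c_n; in particular this value is independent of the imaginary unit I. -/
noncomputable section

local notation "ℍ" => Quaternion ℝ

open Real MeasureTheory

theorem re_eq_zero (I : ℍ) (hI : I ^ 2 = -1) : I.re = 0 := by
  have h := hI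
  rw [Quaternion.ext_iff, pow_two] at h
  simp only [Quaternion.re_mul, Quaternion.imI_mul, Quaternion.imJ_mul, Quaternion.imK_mul,
    Quaternion.re_neg, Quaternion.imI_neg, Quaternion.imJ_neg, Quaternion.imK_neg,
    Quaternion.re_one, Quaternion.imI_one, Quaternion.imJ_one, Quaternion.imK_one] at h
  obtain ⟨h1, h2, h3, h4⟩ := h
  by_contra hre
  have hi : I.imI = 0 := by
    have : I.re * I.imI = 0 := by nlinarith [h2]
    exact (mul_eq_zero.mp this).resolve_left hre
  have hj : I.imJ = 0 := by
    have : I.re * I.imJ = 0 := by nlinarith [h3]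
    exact (mul_eq_zero.mp this).resolve_left hre
  have hk : I.imK = 0 := by
    have : I.re * I.imK = 0 := by nlinarith [h4]
    exact (mul_eq_zero.mp this).resolve_left hre
  rw [hi, hj, hk] at h1; nlinarith

theorem star_I (I : ℍ) (hI : I ^ 2 = -1) : star I = -I := by
  have h := re_eq_zero I hI
  ext <;> simp [h]

theorem coe_eq_smul_one (r : ℝ) : (r : ℍ) = r • (1:ℍ) := by ext <;> simp [Quaternion.re_one, Quaternion.imI_one, Quaternion.imJ_one, Quaternion.imK_one]

theorem expI_smul (I : ℍ) (t : ℝ) : expI I t = Real.cos t • (1:ℍ) + Real.sin t • I := by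
  rw [expI, Quaternion.coe_mul_eq_smul, coe_eq_smul_one]

theorem expI_zero (I : ℍ) : expI I 0 = 1 := by simp [expI]

theorem expI_add (I : ℍ) (hI : I ^ 2 = -1) (s t : ℝ) :
    expI I (s + t) = expI I s * expI I t := by
  have h2 : I * I = -1 := by rw [← pow_two]; exact hI
  simp only [expI_smul, Real.cos_add, Real.sin_add, mul_add, add_mul,
    smul_mul_smul_comm, h2, one_mul, mul_one]
  module

theorem expI_pow (I : ℍ) (hI : I ^ 2 = -1) (t : ℝ) (n : ℕ) :
    (expI I t) ^ n = expI I (n * t) := by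
  induction n with
  | zero => simp [expI_zero]
  | succ n ih =>
      rw [pow_succ, ih, ← expI_add I hI]
      push_cast; ring_nf

theorem star_expI (I : ℍ) (hI : I ^ 2 = -1) (t : ℝ) :
    star (expI I t) = expI I (-t) := by
  simp only [expI_smul, Real.cos_neg, Real.sin_neg, star_add, Quaternion.star_smul, star_one,
    star_I I hI, star_trivial, smul_neg, neg_smul]

theorem norm_expI (I : ℍ) (hI : I ^ 2 = -1) (t : ℝ) : ‖expI I t‖ = 1 := by
  have h : expI I t * star (expI I t) = 1 := by
    rw [star_expI I hI, ← expI_add I hI, add_neg_cancel, expI_zero]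
  have := congrArg norm h
  rw [norm_mul, norm_star, norm_one] at this
  nlinarith [norm_nonneg (expI I t)]

theorem continuous_expI (I : ℍ) : Continuous fun t => expI I t := by
  simp only [expI_smul]
  exact ((Real.continuous_cos.smul continuous_const).add
    (Real.continuous_sin.smul continuous_const))

theorem int_cos (k : ℤ) : ∫ t in (0:ℝ)..(2*π), Real.cos (k*t) = if k = 0 then 2*π else 0 := by
  rcases eq_or_ne k 0 with h | h
  · simp [h]
  · have hk : (k:ℝ) ≠ 0 := Int.cast_ne_zero.mpr h
    rw [if_neg h, intervalIntegral.integral_comp_mul_left (fun x => Real.cos x) hk]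
    simp only [mul_zero, integral_cos, Real.sin_zero, sub_zero]
    rw [show (k:ℝ) * (2*π) = 0 + (k:ℝ) * (2*π) by ring, Real.sin_add_int_mul_two_pi 0 k]
    simp

theorem int_sin (k : ℤ) : ∫ t in (0:ℝ)..(2*π), Real.sin (k*t) = 0 := by
  rcases eq_or_ne k 0 with h | h
  · simp [h]
  · have hk : (k:ℝ) ≠ 0 := Int.cast_ne_zero.mpr h
    rw [intervalIntegral.integral_comp_mul_left (fun x => Real.sin x) hk]
    simp only [mul_zero, integral_sin, Real.cos_zero]
    rw [show (k:ℝ) * (2*π) = 0 + (k:ℝ) * (2*π) by ring, Real.cos_add_int_mul_two_pi 0 k]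
    simp

theorem integral_expI (I : ℍ) (hI : I ^ 2 = -1) (k : ℤ) :
    ∫ t in (0:ℝ)..(2*π), expI I (k * t) = if k = 0 then ((2*π : ℝ) : ℍ) else 0 := by
  have h : ∀ t : ℝ, expI I (k * t) = Real.cos (k*t) • (1:ℍ) + Real.sin (k*t) • I :=
    fun t => expI_smul I _
  have hc1 : Continuous fun t : ℝ => Real.cos ((k:ℝ)*t) • (1:ℍ) :=
    (Real.continuous_cos.comp (continuous_const.mul continuous_id)).smul continuous_const
  have hc2 : Continuous fun t : ℝ => Real.sin ((k:ℝ)*t) • I :=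
    (Real.continuous_sin.comp (continuous_const.mul continuous_id)).smul continuous_const
  rw [intervalIntegral.integral_congr (fun t _ => h t),
    intervalIntegral.integral_add (hc1.intervalIntegrable _ _) (hc2.intervalIntegrable _ _),
    intervalIntegral.integral_smul_const, intervalIntegral.integral_smul_const,
    int_cos, int_sin]
  rcases eq_or_ne k 0 with h0 | h0
  · simp only [h0, if_pos, coe_eq_smul_one]
    simp
  · simp [h0]

theorem pair_integral (I : ℍ) (hI : I ^ 2 = -1) (x y : ℍ) (m n : ℕ) :
    ∫ t in (0:ℝ)..(2*π), star (expI I t ^ m * x) * (expI I t ^ n * y)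
      = if m = n then (2*π) • (star x * y) else 0 := by
  classical
  set k : ℤ := (n : ℤ) - (m : ℤ) with hk
  set L : ℍ →L[ℝ] ℍ := ContinuousLinearMap.mulLeftRight ℝ ℍ (star x) y with hL
  set f : ℝ → ℍ := fun t => expI I ((k : ℝ) * t) with hf
  have hfun : ∀ t : ℝ, star (expI I t ^ m * x) * (expI I t ^ n * y) = L (f t) := by
    intro t
    have h1 : star (expI I t ^ m * x) = star x * expI I (-((m:ℝ) * t)) := by
      rw [star_mul, expI_pow I hI, star_expI I hI]
    have h2 : expI I (-((m:ℝ) * t)) * (expI I ((n:ℝ) * t) * y) = f t * y := by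
      rw [← mul_assoc, ← expI_add I hI, hf]
      congr 2
      rw [hk]; push_cast; ring
    rw [h1, expI_pow I hI, mul_assoc, h2, hL, ContinuousLinearMap.mulLeftRight_apply,
      mul_assoc]
  have hcont : Continuous f := (continuous_expI I).comp (continuous_const.mul continuous_id)
  rw [intervalIntegral.integral_congr (fun t _ => hfun t),
    L.intervalIntegral_comp_comm (hcont.intervalIntegrable _ _), hf]
  rw [integral_expI I hI]
  rcases eq_or_ne m n with h | h
  · rw [if_pos (by omega), if_pos h, hL, ContinuousLinearMap.mulLeftRight_apply]
    rw [coe_eq_smul_one, mul_smul_comm, smul_mul_assoc, mul_one]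
  · rw [if_neg (by omega), if_neg h, map_zero]

set_option maxHeartbeats 2000000 in
/-- the boundary inner product on any slice circle equals
`Σ_n conj(b_n) c_n`, independently of the imaginary unit `I`. -/
theorem boundary_inner_product (b c : ℕ → ℍ)
    (hb : Summable fun n => ‖b n‖) (hc : Summable fun n => ‖c n‖)
    (I : ℍ) (hI : I ^ 2 = -1) :
    (2 * Real.pi)⁻¹ •
        ∫ t in (0 : ℝ)..(2 * Real.pi), star (Fc b (expI I t)) * Fc c (expI I t)
      = ∑' n, star (b n) * c n := by
  classical
  have hπ : (0:ℝ) < 2*π := by positivity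
  set F : ℕ × ℕ → ℝ → ℍ :=
    fun p t => star (expI I t ^ p.1 * b p.1) * (expI I t ^ p.2 * c p.2) with hF
  have hnq : ∀ (t : ℝ) (n : ℕ), ‖expI I t ^ n‖ = 1 := fun t n => by
    rw [norm_pow, norm_expI I hI, one_pow]
  have hnormF : ∀ p t, ‖F p t‖ = ‖b p.1‖ * ‖c p.2‖ := by
    intro p t
    rw [hF]
    simp only [norm_mul, norm_star, norm_mul, hnq, one_mul]
  have key : ∀ t : ℝ, star (Fc b (expI I t)) * Fc c (expI I t) = ∑' p : ℕ × ℕ, F p t := by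
    intro t
    have hB : Summable fun n => ‖star (expI I t ^ n * b n)‖ :=
      hb.congr fun n => by rw [norm_star, norm_mul, hnq, one_mul]
    have hC : Summable fun n => ‖expI I t ^ n * c n‖ :=
      hc.congr fun n => by rw [norm_mul, hnq, one_mul]
    rw [Fc, Fc, tsum_star, tsum_mul_tsum_of_summable_norm hB hC]
  simp only [key]
  rw [intervalIntegral.integral_of_le hπ.le]
  have hFc : ∀ p, Continuous (F p) := by
    intro p
    exact ((((continuous_expI I).pow p.1).mul continuous_const).star).mul
      (((continuous_expI I).pow p.2).mul continuous_const)
  have hInt : ∀ p, MeasureTheory.Integrable (F p)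
      (MeasureTheory.volume.restrict (Set.Ioc (0:ℝ) (2*π))) := by
    intro p
    exact (hFc p).integrableOn_Ioc
  have hdiag : Summable fun p : ℕ × ℕ => ‖b p.1‖ * ‖c p.2‖ :=
    hb.mul_of_nonneg hc (fun _ => norm_nonneg _) fun _ => norm_nonneg _
  have hSum : Summable fun p : ℕ × ℕ =>
      ∫ t in Set.Ioc (0:ℝ) (2*π), ‖F p t‖ := by
    apply Summable.congr (hdiag.mul_left (2*π))
    intro p
    simp only [hnormF]
    rw [MeasureTheory.setIntegral_const, Real.volume_real_Ioc, sub_zero,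
      max_eq_left hπ.le, smul_eq_mul]
  rw [← MeasureTheory.integral_tsum_of_summable_integral_norm hInt hSum]
  have hpair : ∀ p : ℕ × ℕ, ∫ t in Set.Ioc (0:ℝ) (2*π), F p t
      = if p.1 = p.2 then (2*π) • (star (b p.1) * c p.2) else 0 := by
    intro p
    rw [← intervalIntegral.integral_of_le hπ.le]
    exact pair_integral I hI (b p.1) (c p.2) p.1 p.2
  rw [tsum_congr hpair]
  have hginj : Function.Injective (fun n : ℕ => ((n, n) : ℕ × ℕ)) := fun a b h => by
    simpa using congrArg Prod.fst h
  have hoff : (Function.support fun p : ℕ × ℕ =>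
      if p.1 = p.2 then (2*π) • (star (b p.1) * c p.2) else 0) ⊆
      Set.range (fun n : ℕ => ((n, n) : ℕ × ℕ)) := by
    intro p hp
    by_cases h : p.1 = p.2
    · exact ⟨p.1, by rw [Prod.ext_iff]; exact ⟨rfl, h⟩⟩
    · exact absurd (if_neg h) hp
  rw [← hginj.tsum_eq hoff]
  have hd : Summable fun n => star (b n) * c n := by
    apply Summable.of_norm
    apply Summable.of_nonneg_of_le (fun n => norm_nonneg _)
      (fun n => ?_) (hb.mul_right (∑' m, ‖c m‖))
    rw [norm_mul, norm_star]
    exact mul_le_mul_of_nonneg_left (Summable.le_tsum hc n fun _ _ => norm_nonneg _) (norm_nonneg _)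
  have : (fun n : ℕ => if ((n, n) : ℕ × ℕ).1 = ((n, n) : ℕ × ℕ).2
      then (2*π) • (star (b ((n,n):ℕ×ℕ).1) * c ((n,n):ℕ×ℕ).2) else 0)
      = fun n : ℕ => (2*π) • (star (b n) * c n) := by
    funext n; rw [if_pos rfl]
  rw [this, Summable.tsum_const_smul _ hd, smul_smul, inv_mul_cancel₀ hπ.ne', one_smul]
end
end

section
/- For every a ∈ 𝔹 \ {0} and every q ∈ ℍ with |q| ≤ 1: B_a(q) = 0 if and only if q = a; i.e., the slice Blaschke factor B_a has the unique zero a. -/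
noncomputable section

local notation "ℍ" => Quaternion ℝ

private lemma aux_real1 (A Q : ℝ) (hA : 0 ≤ A) (hA1 : A < 1) (hQ : 0 ≤ Q) (hQ1 : Q ≤ 1)
    (x : ℝ) (h : 1 - A^2 * Q^2 + 0 * x = 0) : False := by
  have h1 : A*Q ≤ A := by nlinarith
  have h0 : 0 ≤ A*Q := mul_nonneg hA hQ
  have h2 : (A*Q)^2 = 1 := by nlinarith
  nlinarith

private lemma aux_real2 (A x p : ℝ) (hA : 0 ≤ A) (hA1 : A < 1) (hp : p^2 ≤ A^2) (hx : x^2 ≤ 1)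
    (h : 1 - A^2*x^2 + (2*A^2*x - 2*p)*x = 0) : False := by
  have hre' : 2*p*x = 1 + A^2*x^2 := by linarith
  have key : (1 + A^2*x^2)^2 ≤ 4*(A^2*x^2) := by
    have h1 := mul_le_mul_of_nonneg_right hp (sq_nonneg x)
    nlinarith [sq_nonneg (p*x)]
  have hub : A^2 * x^2 ≤ A^2 * 1 := mul_le_mul_of_nonneg_left hx (sq_nonneg A)
  have hu : A^2 * x^2 < 1 := by nlinarith
  have h2 : (1 - A^2*x^2)^2 ≤ 0 := by nlinarith
  have h3 : 0 < (1 - A^2*x^2)^2 := pow_pos (by linarith) 2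
  linarith

private lemma norm_sq_quat (q : Quaternion ℝ) :
    ‖q‖^2 = Quaternion.normSq q := by
  rw [Quaternion.normSq_eq_norm_mul_self]; ring

private lemma re_sq_le_norm_sq (a : Quaternion ℝ) : a.re^2 ≤ ‖a‖^2 := by
  rw [norm_sq_quat, Quaternion.normSq_def']
  nlinarith [sq_nonneg a.imI, sq_nonneg a.imJ, sq_nonneg a.imK]

private lemma denom_ne_zero (a : Quaternion ℝ) (ha : ‖a‖ < 1) (q : Quaternion ℝ)
    (hq : ‖q‖ ≤ 1) :
    ((1 : Quaternion ℝ) - ((2 * a.re : ℝ) : Quaternion ℝ) * q +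
      ((‖a‖ ^ 2 : ℝ) : Quaternion ℝ) * q ^ 2) ≠ 0 := by
  intro h
  have hq2 : q^2 = ((2*q.re : ℝ) : Quaternion ℝ) * q - ((‖q‖^2 : ℝ) : Quaternion ℝ) := by
    rw [show ‖q‖^2 = Quaternion.normSq q from norm_sq_quat q]
    ext <;> simp [pow_two, Quaternion.normSq_def'] <;> ring
  have h' : (((1 - ‖a‖^2*‖q‖^2 : ℝ)) : Quaternion ℝ) +
      ((2*‖a‖^2*q.re - 2*a.re : ℝ) : Quaternion ℝ) * q = 0 := by
    rw [← h, hq2]; ext <;> simp [pow_two] <;> ring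
  set r := (1 - ‖a‖^2*‖q‖^2 : ℝ) with hr
  set s := (2*‖a‖^2*q.re - 2*a.re : ℝ) with hs
  have hre := congrArg QuaternionAlgebra.re h'
  have hi := congrArg QuaternionAlgebra.imI h'
  have hj := congrArg QuaternionAlgebra.imJ h'
  have hk := congrArg QuaternionAlgebra.imK h'
  simp [Quaternion.re_zero, Quaternion.imI_zero, Quaternion.imJ_zero, Quaternion.imK_zero] at hre hi hj hk
  have hA : (0:ℝ) ≤ ‖a‖ := norm_nonneg a
  have hQ : (0:ℝ) ≤ ‖q‖ := norm_nonneg q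
  have hare : a.re^2 ≤ ‖a‖^2 := re_sq_le_norm_sq a
  by_cases hs0 : s = 0
  · rw [hs0, hr] at hre
    exact aux_real1 ‖a‖ ‖q‖ hA ha hQ hq q.re hre
  · have hI := hi.resolve_left hs0
    have hJ := hj.resolve_left hs0
    have hK := hk.resolve_left hs0
    have hqx : ‖q‖^2 = q.re^2 := by
      rw [norm_sq_quat, Quaternion.normSq_def', hI, hJ, hK]; ring
    have hx2 : q.re^2 ≤ 1 := by rw [← hqx]; nlinarith
    rw [hr, hs, hqx] at hre
    exact aux_real2 ‖a‖ q.re a.re hA ha hare hx2 hre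

/-- The slice Blaschke factor written explicitly:
`B_a(q) = (1 - 2Re(a)q + |a|²q²)⁻¹ (a - q(1+a²) + q²a)(a/|a|)`. -/
def Ba (a : ℍ) (q : ℍ) : ℍ :=
  ((1 : ℍ) - ((2 * a.re : ℝ) : ℍ) * q + ((‖a‖ ^ 2 : ℝ) : ℍ) * q ^ 2)⁻¹ *
    (a - q * (1 + a ^ 2) + q ^ 2 * a) * (a / (‖a‖ : ℍ))

/-- the slice Blaschke factor `B_a` has the unique zero `a`
in the closed unit ball. -/
theorem blaschke_unique_zero (a : ℍ) (ha : ‖a‖ < 1) (ha0 : a ≠ 0) :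
    ∀ q : ℍ, ‖q‖ ≤ 1 → (Ba a q = 0 ↔ q = a) := by
  intro q hq
  have hD := denom_ne_zero a ha q hq
  have hnorm : (0:ℝ) < ‖a‖ := norm_pos_iff.mpr ha0
  have hquot : a / ((‖a‖ : ℝ) : ℍ) ≠ 0 := by
    apply div_ne_zero ha0
    exact fun hc => hnorm.ne' (Quaternion.coe_injective (by simpa using hc))
  have hfact : (a - q * (1 + a ^ 2) + q ^ 2 * a) = (a - q) - q * (a - q) * a := by
    noncomm_ring
  rw [Ba, hfact]
  constructor
  · intro h
    rcases mul_eq_zero.mp h with h1 | h2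
    · rcases mul_eq_zero.mp h1 with h3 | h4
      · exact absurd h3 (inv_ne_zero hD)
      · -- (a - q) = q (a - q) a
        have key : a - q = q * (a - q) * a := sub_eq_zero.mp h4
        by_contra hne
        have hpos : (0:ℝ) < ‖a - q‖ := by
          rw [norm_pos_iff, sub_ne_zero]
          exact fun hh => hne hh.symm
        have hnrm : ‖a - q‖ = ‖q‖ * ‖a - q‖ * ‖a‖ := by
          have := congrArg norm key
          rwa [norm_mul, norm_mul] at this
        nlinarith [norm_nonneg q, norm_nonneg a, mul_le_mul_of_nonneg_right hq hpos.le]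
    · exact absurd h2 hquot
  · intro h
    subst h
    simp
end
end

section
/- (Orthonormality of the slice Takenaka–Malmquist system.) Let a_1, a_2, … ∈ 𝔹. Then the slice Takenaka–Malmquist sequences are orthonormal in ℓ²(ℕ,ℍ): for all k, l ≥ 1, ⟨τ_k, τ_l⟩ = 1 if k = l and ⟨τ_k, τ_l⟩ = 0 if k ≠ l. -/
noncomputable section

local notation "ℍ" => Quaternion ℝ

open Finset


def GD (c : ℕ → ℍ) : Prop :=
  ∃ r C : ℝ, 0 ≤ r ∧ r < 1 ∧ 0 ≤ C ∧ ∀ n, ‖c n‖ ≤ C * r ^ n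

lemma poly_geom_bound {x : ℝ} (h0 : 0 ≤ x) (h1 : x < 1) :
    ∃ K : ℝ, 0 ≤ K ∧ ∀ n : ℕ, ((n : ℝ) + 1) * x ^ n ≤ K := by
  have hx : ‖x‖ < 1 := by rwa [Real.norm_eq_abs, abs_of_nonneg h0]
  have hs : Summable (fun n : ℕ => ((n : ℝ) + 1) * x ^ n) := by
    have h := summable_pow_mul_geometric_of_norm_lt_one 1 hx
    have hg := summable_geometric_of_lt_one h0 h1
    simpa [add_mul, pow_one] using h.add hg
  refine ⟨∑' n : ℕ, ((n : ℝ) + 1) * x ^ n, tsum_nonneg fun n => by positivity, fun n => ?_⟩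
  exact Summable.le_tsum hs n fun i _ => by positivity

lemma gd_cprod {b c : ℕ → ℍ} (hb : GD b) (hc : GD c) : GD (cprod b c) := by
  obtain ⟨r, C, hr0, hr1, hC0, hC⟩ := hb
  obtain ⟨s, D, hs0, hs1, hD0, hD⟩ := hc
  set t := max r s with ht
  have ht0 : 0 ≤ t := le_max_of_le_left hr0
  have ht1 : t < 1 := max_lt hr1 hs1
  set t' := (t + 1) / 2 with ht'
  have ht'0 : 0 < t' := by simp only [ht']; linarith
  have ht'1 : t' < 1 := by simp only [ht']; linarith
  have htt' : t < t' := by simp only [ht']; linarith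
  obtain ⟨K, hK0, hK⟩ := poly_geom_bound (x := t / t') (by positivity)
    ((div_lt_one ht'0).mpr htt')
  refine ⟨t', C * D * K, le_of_lt ht'0, ht'1, by positivity, fun n => ?_⟩
  have step1 : ‖cprod b c n‖ ≤ C * D * ((n : ℝ) + 1) * t ^ n := by
    calc ‖cprod b c n‖ ≤ ∑ k ∈ range (n + 1), ‖b k * c (n - k)‖ := norm_sum_le _ _
    _ ≤ ∑ k ∈ range (n + 1), C * D * t ^ n := by
        refine Finset.sum_le_sum fun k hk => ?_
        have hk' : k ≤ n := Nat.lt_succ_iff.mp (mem_range.mp hk)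
        rw [norm_mul]
        have h1 : ‖b k‖ ≤ C * t ^ k :=
          (hC k).trans (by
            have := pow_le_pow_left₀ hr0 (le_max_left r s) k
            nlinarith [pow_nonneg hr0 k])
        have h2 : ‖c (n - k)‖ ≤ D * t ^ (n - k) :=
          (hD (n - k)).trans (by
            have := pow_le_pow_left₀ hs0 (le_max_right r s) (n - k)
            nlinarith [pow_nonneg hs0 (n - k)])
        calc ‖b k‖ * ‖c (n - k)‖ ≤ (C * t ^ k) * (D * t ^ (n - k)) := by
              have := norm_nonneg (b k)
              have := norm_nonneg (c (n - k))
              have h3 : (0:ℝ) ≤ C * t ^ k := by positivity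
              nlinarith
        _ = C * D * (t ^ k * t ^ (n - k)) := by ring
        _ = C * D * t ^ n := by rw [← pow_add, Nat.add_sub_cancel' hk']
    _ = C * D * ((n : ℝ) + 1) * t ^ n := by
        rw [Finset.sum_const, card_range]
        ring
  have step2 : C * D * ((n : ℝ) + 1) * t ^ n ≤ C * D * K * t' ^ n := by
    have hkey : ((n : ℝ) + 1) * t ^ n ≤ K * t' ^ n := by
      have := hK n
      have hpow : ((n : ℝ) + 1) * (t / t') ^ n * t' ^ n ≤ K * t' ^ n := by
        apply mul_le_mul_of_nonneg_right (hK n) (by positivity)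
      calc ((n : ℝ) + 1) * t ^ n = ((n : ℝ) + 1) * (t / t') ^ n * t' ^ n := by
            rw [div_pow, mul_assoc, div_mul_cancel₀]
            positivity
      _ ≤ K * t' ^ n := hpow
    calc C * D * ((n : ℝ) + 1) * t ^ n = (C * D) * (((n : ℝ) + 1) * t ^ n) := by ring
    _ ≤ (C * D) * (K * t' ^ n) := by
        apply mul_le_mul_of_nonneg_left hkey (by positivity)
    _ = C * D * K * t' ^ n := by ring
  exact step1.trans step2

lemma betaC_zero : betaC (0 : ℍ) = fun n => if n = 1 then (1:ℍ) else 0 := by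
  unfold betaC
  rw [if_pos rfl]

lemma betaC_ne {a : ℍ} (h : a ≠ 0) : betaC a = fun n =>
    if n = 0 then a ^ 2 / (‖a‖ : ℍ)
    else -((star a) ^ (n - 1) * ((1 - ‖a‖ ^ 2 : ℝ) : ℍ) * (a / (‖a‖ : ℍ))) := by
  unfold betaC
  rw [if_neg h]

lemma gd_delta : GD deltaSeq := by
  refine ⟨1/2, 1, by norm_num, by norm_num, by norm_num, fun n => ?_⟩
  match n with
  | 0 => simp [deltaSeq]
  | (m+1) =>
    simp only [deltaSeq]
    rw [if_neg (Nat.succ_ne_zero m), norm_zero]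
    positivity

lemma gd_eps {a : ℍ} (ha : ‖a‖ < 1) : GD (eps a) := by
  refine ⟨‖a‖, 1, norm_nonneg a, ha, zero_le_one, fun n => ?_⟩
  rw [eps, norm_smul, norm_pow, Quaternion.norm_star, one_mul, Real.norm_eq_abs]
  have h1 : |Real.sqrt (1 - ‖a‖ ^ 2)| ≤ 1 := by
    rw [abs_of_nonneg (Real.sqrt_nonneg _)]
    exact Real.sqrt_le_one.mpr (by nlinarith [norm_nonneg a])
  have := pow_nonneg (norm_nonneg a) n
  nlinarith [pow_nonneg (norm_nonneg a) n]

lemma norm_coe_norm (a : ℍ) : ‖((‖a‖ : ℝ) : ℍ)‖ = ‖a‖ := by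
  rw [Quaternion.norm_coe, Real.norm_eq_abs, abs_of_nonneg (norm_nonneg a)]

lemma gd_beta {a : ℍ} (ha : ‖a‖ < 1) : GD (betaC a) := by
  by_cases h : a = 0
  · subst h
    refine ⟨1/2, 2, by norm_num, by norm_num, by norm_num, fun n => ?_⟩
    rw [betaC_zero]
    match n with
    | 0 => norm_num
    | 1 => norm_num
    | (m+2) =>
      simp only
      rw [if_neg (by omega : m + 2 ≠ 1), norm_zero]
      positivity
  · have h0 : 0 < ‖a‖ := norm_pos_iff.mpr h
    refine ⟨‖a‖, ‖a‖⁻¹, norm_nonneg a, ha, by positivity, fun n => ?_⟩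
    rw [betaC_ne h]
    simp only
    have hc : ‖((‖a‖ : ℝ) : ℍ)‖ = ‖a‖ := norm_coe_norm a
    match n with
    | 0 =>
      rw [if_pos rfl, norm_div, norm_pow, hc]
      have key : ‖a‖ ^ 2 / ‖a‖ = ‖a‖ := by
        field_simp [pow_two]
      rw [key, pow_zero, mul_one]
      have h2 : ‖a‖ * ‖a‖ ≤ 1 := by nlinarith
      calc ‖a‖ = (‖a‖ * ‖a‖) * ‖a‖⁻¹ := by field_simp
      _ ≤ 1 * ‖a‖⁻¹ := mul_le_mul_of_nonneg_right h2 (by positivity)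
      _ = ‖a‖⁻¹ := one_mul _
    | (m+1) =>
      rw [if_neg (Nat.succ_ne_zero m), Nat.add_sub_cancel, norm_neg, norm_mul, norm_mul,
        norm_pow, Quaternion.norm_star, norm_div, hc, div_self (ne_of_gt h0), mul_one]
      have hc2 : ‖(((1 - ‖a‖ ^ 2 : ℝ)) : ℍ)‖ = 1 - ‖a‖ ^ 2 := by
        rw [Quaternion.norm_coe, Real.norm_eq_abs, abs_of_nonneg (by nlinarith [norm_nonneg a])]
      rw [hc2]
      have hne : ‖a‖⁻¹ * ‖a‖ ^ (m + 1) = ‖a‖ ^ m := by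
        rw [pow_succ']
        field_simp
      rw [hne]
      have hp : (0:ℝ) ≤ ‖a‖ ^ m := by positivity
      nlinarith [norm_nonneg a, pow_nonneg (norm_nonneg a) m]

lemma summable_geom_bound2 {F : ℕ × ℕ → ℍ} {K r s : ℝ} (hr0 : 0 ≤ r) (hr1 : r < 1)
    (hs0 : 0 ≤ s) (hs1 : s < 1) (h : ∀ p : ℕ × ℕ, ‖F p‖ ≤ K * (r ^ p.1 * s ^ p.2)) :
    Summable F := by
  refine Summable.of_norm_bounded ?_ h
  exact (((summable_geometric_of_lt_one hr0 hr1).mul_of_nonneg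
    (summable_geometric_of_lt_one hs0 hs1) (fun n => pow_nonneg hr0 n)
    (fun n => pow_nonneg hs0 n))).mul_left K

lemma gd_summable_shift_mul {c d : ℕ → ℍ} (hc : GD c) (hd : GD d) (p : ℕ) :
    Summable (fun j => star (c (j + p)) * d j) := by
  obtain ⟨r, C, hr0, hr1, hC0, hC⟩ := hc
  obtain ⟨s, D, hs0, hs1, hD0, hD⟩ := hd
  have hrs1 : r * s < 1 := by nlinarith
  refine Summable.of_norm_bounded
    ((summable_geometric_of_lt_one (by positivity) hrs1).mul_left (C * r ^ p * D)) (fun j => ?_)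
  rw [norm_mul, norm_star]
  calc ‖c (j + p)‖ * ‖d j‖ ≤ (C * r ^ (j + p)) * (D * s ^ j) := by
        have h1 := hC (j + p); have h2 := hD j
        have := norm_nonneg (c (j + p)); have := norm_nonneg (d j)
        have : (0:ℝ) ≤ C * r ^ (j + p) := by positivity
        nlinarith
  _ = C * r ^ p * D * (r * s) ^ j := by rw [pow_add, mul_pow]; ring

lemma tsum_prod_range (F : ℕ × ℕ → ℍ) (h : Summable F) :
    ∑' p : ℕ × ℕ, F p = ∑' n, ∑ k ∈ Finset.range (n + 1), F (k, n - k) := by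
  have h2 : Summable fun x : Σ n : ℕ, Finset.HasAntidiagonal.antidiagonal n => F x.2 :=
    Finset.HasAntidiagonal.sigmaAntidiagonalEquivProd.summable_iff.mpr h
  rw [← Finset.HasAntidiagonal.sigmaAntidiagonalEquivProd.tsum_eq F]
  simp only [Finset.HasAntidiagonal.sigmaAntidiagonalEquivProd_apply]
  rw [Summable.tsum_sigma h2]
  congr 1
  funext n
  rw [Finset.tsum_subtype (Finset.HasAntidiagonal.antidiagonal n) F,
    Finset.Nat.sum_antidiagonal_eq_sum_range_succ_mk]

lemma tsum_shift (f : ℕ → ℍ) (p : ℕ) (h : ∀ n, n < p → f n = 0) :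
    ∑' n, f n = ∑' t, f (t + p) := by
  refine ((add_left_injective p).tsum_eq ?_).symm
  rw [Function.support_subset_iff']
  intro n hn
  rcases lt_or_ge n p with h1 | h1
  · exact h n h1
  · exact absurd (Set.mem_range.mpr ⟨n - p, by omega⟩) hn

lemma mul_star_self_q (a : ℍ) : a * star a = ((‖a‖ ^ 2 : ℝ) : ℍ) := by
  rw [Quaternion.self_mul_star, Quaternion.normSq_eq_norm_mul_self, pow_two]

lemma star_mul_self_q (a : ℍ) : star a * a = ((‖a‖ ^ 2 : ℝ) : ℍ) := by
  rw [Quaternion.star_mul_self, Quaternion.normSq_eq_norm_mul_self, pow_two]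

lemma pow_mul_star_pow (a : ℍ) (m : ℕ) :
    a ^ m * (star a) ^ m = (((‖a‖ ^ 2) ^ m : ℝ) : ℍ) := by
  rw [← Commute.mul_pow (star_comm_self' a).symm, mul_star_self_q, ← Quaternion.coe_pow]

lemma star_pow_mul_pow (a : ℍ) (m : ℕ) :
    (star a) ^ m * a ^ m = (((‖a‖ ^ 2) ^ m : ℝ) : ℍ) := by
  rw [← Commute.mul_pow (star_comm_self' a), star_mul_self_q, ← Quaternion.coe_pow]

lemma pow_add_mul_star_pow (a : ℍ) (t p : ℕ) :
    a ^ (t + p) * (star a) ^ t = ((‖a‖ ^ 2) ^ t : ℝ) • a ^ p := by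
  rw [add_comm t p, pow_add, mul_assoc, pow_mul_star_pow, Quaternion.mul_coe_eq_smul]

lemma star_mul_pow_succ (a : ℍ) (p : ℕ) :
    star a * a ^ (p + 1) = (‖a‖ ^ 2 : ℝ) • a ^ p := by
  rw [pow_succ', ← mul_assoc, star_mul_self_q, Quaternion.coe_mul_eq_smul]

-- β in smul form (a ≠ 0)
lemma beta0_eq {a : ℍ} (h : a ≠ 0) : betaC a 0 = (‖a‖⁻¹ : ℝ) • a ^ 2 := by
  rw [betaC_ne h]
  simp only [if_pos]
  rw [div_eq_mul_inv, ← Quaternion.coe_inv, Quaternion.mul_coe_eq_smul]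

lemma betaS_eq {a : ℍ} (h : a ≠ 0) (n : ℕ) :
    betaC a (n + 1) = -(((1 - ‖a‖ ^ 2) * ‖a‖⁻¹ : ℝ) • ((star a) ^ n * a)) := by
  rw [betaC_ne h]
  simp only [if_neg (Nat.succ_ne_zero n), Nat.add_sub_cancel]
  rw [div_eq_mul_inv, ← Quaternion.coe_inv, Quaternion.mul_coe_eq_smul,
    Quaternion.mul_coe_eq_smul]
  rw [mul_smul_comm, smul_mul_assoc, smul_smul, mul_comm (‖a‖⁻¹) _]

lemma star_beta0_eq {a : ℍ} (h : a ≠ 0) : star (betaC a 0) = (‖a‖⁻¹ : ℝ) • (star a) ^ 2 := by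
  rw [beta0_eq h, Quaternion.star_smul, star_pow]

lemma star_betaS_eq {a : ℍ} (h : a ≠ 0) (n : ℕ) :
    star (betaC a (n + 1)) = -(((1 - ‖a‖ ^ 2) * ‖a‖⁻¹ : ℝ) • (star a * a ^ n)) := by
  rw [betaS_eq h, star_neg, Quaternion.star_smul, star_mul, star_pow, star_star]

lemma star_eps_eq (a : ℍ) (n : ℕ) :
    star (eps a n) = Real.sqrt (1 - ‖a‖ ^ 2) • a ^ n := by
  rw [eps, Quaternion.star_smul, star_pow, star_star]

lemma coe_eq_smul_one_s9 (x : ℝ) : ((x : ℝ) : ℍ) = x • (1 : ℍ) := by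
  rw [← Quaternion.coe_mul_eq_smul, mul_one]

lemma sandwich (a : ℍ) (t q : ℕ) :
    star a * a ^ (t + q) * ((star a) ^ t * a) = ((‖a‖ ^ 2) ^ (t + 1) : ℝ) • a ^ q := by
  rw [mul_assoc, ← mul_assoc (a ^ (t + q)), pow_add_mul_star_pow, smul_mul_assoc,
    mul_smul_comm, ← pow_succ, star_mul_pow_succ, smul_smul, ← pow_succ]

lemma Sbeta {a : ℍ} (ha : ‖a‖ < 1) (p : ℕ) :
    ∑' j, star (betaC a (j + p)) * betaC a j = if p = 0 then 1 else 0 := by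
  by_cases h : a = 0
  · subst h
    rcases Nat.eq_zero_or_pos p with hp | hp
    · subst hp
      rw [if_pos rfl]
      have he : (fun j => star (betaC 0 (j + 0)) * betaC 0 j)
          = fun j => if j = 1 then (1 : ℍ) else 0 := by
        funext j
        rw [betaC_zero, add_zero]
        by_cases hj : j = 1 <;> simp [hj]
      rw [he]
      exact tsum_ite_eq 1 1
    · rw [if_neg (by omega)]
      have he : (fun j => star (betaC 0 (j + p)) * betaC 0 j) = fun _ => (0 : ℍ) := by
        funext j
        rw [betaC_zero]
        simp only
        by_cases hj : j = 1
        · subst hj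
          rw [if_neg (by omega : 1 + p ≠ 1)]
          simp
        · rw [if_neg hj]
          simp
      rw [he, tsum_zero]
  · have h0 : 0 < ‖a‖ := norm_pos_iff.mpr h
    have hr2 : ‖a‖ ^ 2 < 1 := by nlinarith
    have hr20 : (0 : ℝ) ≤ ‖a‖ ^ 2 := by positivity
    have hne : (1 : ℝ) - ‖a‖ ^ 2 ≠ 0 := by nlinarith
    have hgs : Summable (fun j : ℕ => (‖a‖ ^ 2) ^ j) := summable_geometric_of_lt_one hr20 hr2
    have hsum : Summable (fun j => star (betaC a (j + p)) * betaC a j) :=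
      gd_summable_shift_mul (gd_beta ha) (gd_beta ha) p
    set c : ℝ := (1 - ‖a‖ ^ 2) * ‖a‖⁻¹ with hc
    rw [Summable.tsum_eq_zero_add hsum]
    rcases Nat.eq_zero_or_pos p with hp | hp
    · subst hp
      rw [if_pos rfl]
      have h1 : ∀ j : ℕ, star (betaC a (j + 1 + 0)) * betaC a (j + 1)
          = ((c * c * ‖a‖ ^ 2) * (‖a‖ ^ 2) ^ j) • (1 : ℍ) := by
        intro j
        rw [add_zero, star_betaS_eq h, betaS_eq h, neg_mul_neg, smul_mul_assoc, mul_smul_comm,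
          smul_smul]
        rw [show a ^ j = a ^ (j + 0) from by rw [add_zero], sandwich, smul_smul, pow_zero]
        congr 1
        rw [pow_succ]
        ring
      rw [tsum_congr h1, (hgs.mul_left _).tsum_smul_const, tsum_mul_left,
        tsum_geometric_of_lt_one hr20 hr2]
      rw [zero_add, star_beta0_eq h, beta0_eq h, smul_mul_assoc, mul_smul_comm, smul_smul,
        star_pow_mul_pow, coe_eq_smul_one_s9, smul_smul, ← add_smul]
      rw [show (‖a‖⁻¹ * ‖a‖⁻¹ * (‖a‖ ^ 2) ^ 2 + c * c * ‖a‖ ^ 2 * (1 - ‖a‖ ^ 2)⁻¹ : ℝ) = 1 from by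
        rw [hc]; field_simp; ring]
      rw [one_smul]
    · obtain ⟨q, rfl⟩ : ∃ q, p = q + 1 := ⟨p - 1, by omega⟩
      rw [if_neg (by omega)]
      have h1 : ∀ j : ℕ, star (betaC a (j + 1 + (q + 1))) * betaC a (j + 1)
          = ((c * c * ‖a‖ ^ 2) * (‖a‖ ^ 2) ^ j) • a ^ (q + 1) := by
        intro j
        rw [show j + 1 + (q + 1) = (j + (q + 1)) + 1 from by omega]
        rw [star_betaS_eq h, betaS_eq h, neg_mul_neg, smul_mul_assoc, mul_smul_comm, smul_smul,
          sandwich, smul_smul]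
        congr 1
        rw [pow_succ]
        ring
      rw [tsum_congr h1, (hgs.mul_left _).tsum_smul_const, tsum_mul_left,
        tsum_geometric_of_lt_one hr20 hr2]
      rw [zero_add, star_betaS_eq h, beta0_eq h, neg_mul, smul_mul_assoc, mul_smul_comm,
        smul_smul]
      rw [show star a * a ^ q * a ^ 2 = star a * a ^ (q + 2) from by
        rw [mul_assoc, ← pow_add]]
      rw [show q + 2 = (q + 1) + 1 from rfl, star_mul_pow_succ, smul_smul, ← neg_smul, ← add_smul]
      rw [show (-(c * ‖a‖⁻¹ * ‖a‖ ^ 2) + c * c * ‖a‖ ^ 2 * (1 - ‖a‖ ^ 2)⁻¹ : ℝ) = 0 from by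
        rw [hc]; field_simp; ring]
      rw [zero_smul]

lemma Sbeta' {a : ℍ} (ha : ‖a‖ < 1) (p : ℕ) :
    ∑' j, star (betaC a j) * betaC a (j + p) = if p = 0 then 1 else 0 := by
  have h := congrArg star (Sbeta ha p)
  rw [tsum_star] at h
  simp only [star_mul, star_star] at h
  rw [h]
  by_cases hp : p = 0 <;> simp [hp]

lemma Ebeta {a : ℍ} (ha : ‖a‖ < 1) (m : ℕ) :
    ∑' j, star (eps a (j + m)) * betaC a j = 0 := by
  by_cases h : a = 0
  · subst h
    have he : (fun j => star (eps 0 (j + m)) * betaC 0 j) = fun _ => (0 : ℍ) := by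
      funext j
      rw [betaC_zero]
      simp only
      by_cases hj : j = 1
      · subst hj
        rw [if_pos rfl, mul_one, star_eps_eq]
        rw [zero_pow (by omega : 1 + m ≠ 0), smul_zero]
      · rw [if_neg hj, mul_zero]
    rw [he, tsum_zero]
  · have h0 : 0 < ‖a‖ := norm_pos_iff.mpr h
    have hr2 : ‖a‖ ^ 2 < 1 := by nlinarith
    have hr20 : (0 : ℝ) ≤ ‖a‖ ^ 2 := by positivity
    have hne : (1 : ℝ) - ‖a‖ ^ 2 ≠ 0 := by nlinarith
    have hgs : Summable (fun j : ℕ => (‖a‖ ^ 2) ^ j) := summable_geometric_of_lt_one hr20 hr2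
    have hsum : Summable (fun j => star (eps a (j + m)) * betaC a j) :=
      gd_summable_shift_mul (gd_eps ha) (gd_beta ha) m
    set c : ℝ := (1 - ‖a‖ ^ 2) * ‖a‖⁻¹ with hc
    set s : ℝ := Real.sqrt (1 - ‖a‖ ^ 2) with hs
    rw [Summable.tsum_eq_zero_add hsum]
    have h1 : ∀ j : ℕ, star (eps a (j + 1 + m)) * betaC a (j + 1)
        = ((-(s * c)) * (‖a‖ ^ 2) ^ j) • a ^ (m + 2) := by
      intro j
      rw [star_eps_eq, betaS_eq h, mul_neg, smul_mul_assoc, mul_smul_comm, smul_smul]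
      rw [show j + 1 + m = j + (m + 1) from by omega]
      rw [show a ^ (j + (m + 1)) * ((star a) ^ j * a) = ((‖a‖ ^ 2) ^ j : ℝ) • a ^ (m + 2) from by
        rw [← mul_assoc, pow_add_mul_star_pow, smul_mul_assoc, ← pow_succ]]
      rw [smul_smul, ← neg_smul]
      congr 1
      ring
    rw [tsum_congr h1, (hgs.mul_left _).tsum_smul_const, tsum_mul_left,
      tsum_geometric_of_lt_one hr20 hr2]
    rw [zero_add, star_eps_eq, beta0_eq h, smul_mul_assoc, mul_smul_comm, smul_smul, ← pow_add]
    rw [← add_smul]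
    rw [show (s * ‖a‖⁻¹ + -(s * c) * (1 - ‖a‖ ^ 2)⁻¹ : ℝ) = 0 from by
      rw [hc]; field_simp; ring]
    rw [zero_smul]

lemma Neps {a : ℍ} (ha : ‖a‖ < 1) :
    ∑' n, star (eps a n) * eps a n = 1 := by
  have hr2 : ‖a‖ ^ 2 < 1 := by nlinarith [norm_nonneg a]
  have hr20 : (0 : ℝ) ≤ ‖a‖ ^ 2 := by positivity
  have hne : (1 : ℝ) - ‖a‖ ^ 2 ≠ 0 := by nlinarith
  have hgs : Summable (fun j : ℕ => (‖a‖ ^ 2) ^ j) := summable_geometric_of_lt_one hr20 hr2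
  set s : ℝ := Real.sqrt (1 - ‖a‖ ^ 2) with hs
  have h1 : ∀ n : ℕ, star (eps a n) * eps a n = ((s * s) * (‖a‖ ^ 2) ^ n) • (1 : ℍ) := by
    intro n
    rw [star_eps_eq, eps, smul_mul_assoc, mul_smul_comm, smul_smul, pow_mul_star_pow,
      coe_eq_smul_one_s9, smul_smul]
  rw [tsum_congr h1, (hgs.mul_left _).tsum_smul_const, tsum_mul_left,
    tsum_geometric_of_lt_one hr20 hr2]
  rw [show (s * s : ℝ) = 1 - ‖a‖ ^ 2 from Real.mul_self_sqrt (by nlinarith)]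
  rw [show ((1 - ‖a‖ ^ 2) * (1 - ‖a‖ ^ 2)⁻¹ : ℝ) = 1 from by field_simp]
  rw [one_smul]

lemma eps_norm_le_one {a : ℍ} (ha : ‖a‖ < 1) (n : ℕ) : ‖eps a n‖ ≤ 1 := by
  rw [eps, norm_smul, norm_pow, Quaternion.norm_star, Real.norm_eq_abs]
  have h1 : |Real.sqrt (1 - ‖a‖ ^ 2)| ≤ 1 := by
    rw [abs_of_nonneg (Real.sqrt_nonneg _)]
    exact Real.sqrt_le_one.mpr (by nlinarith [norm_nonneg a])
  have h2 : ‖a‖ ^ n ≤ 1 := pow_le_one₀ (norm_nonneg a) ha.le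
  nlinarith [abs_nonneg (Real.sqrt (1 - ‖a‖ ^ 2)), pow_nonneg (norm_nonneg a) n]

lemma Hkey {a : ℍ} (ha : ‖a‖ < 1) {c : ℕ → ℍ} (hc : GD c) (m' : ℕ) :
    ∑' j, star (betaC a j) * (cprod (betaC a) c) (j + m') = c m' := by
  obtain ⟨r, C, hr0, hr1, hC0, hCb⟩ := gd_beta ha
  obtain ⟨s, D, hs0, hs1, hD0, hD⟩ := hc
  set G : ℕ × ℕ → ℍ := fun q =>
    if q.2 ≤ q.1 + m' then star (betaC a q.1) * (betaC a (q.1 + m' - q.2) * c q.2) else 0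
    with hG
  have hGsum : Summable G := by
    apply summable_geom_bound2 (K := C * (C * D)) hr0 hr1 hs0 hs1
    intro p
    have hK0 : (0:ℝ) ≤ C * (C * D) * (r ^ p.1 * s ^ p.2) := by positivity
    rcases le_or_gt p.2 (p.1 + m') with hle | hlt
    · simp only [hG, if_pos hle]
      rw [norm_mul, norm_star, norm_mul]
      have b1 : ‖betaC a p.1‖ ≤ C * r ^ p.1 := hCb _
      have b2 : ‖betaC a (p.1 + m' - p.2)‖ ≤ C := (hCb _).trans (by
        nlinarith [pow_le_one₀ hr0 hr1.le (n := p.1 + m' - p.2)])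
      have b3 : ‖c p.2‖ ≤ D * s ^ p.2 := hD _
      calc ‖betaC a p.1‖ * (‖betaC a (p.1 + m' - p.2)‖ * ‖c p.2‖)
          ≤ (C * r ^ p.1) * (C * (D * s ^ p.2)) := by
            refine mul_le_mul b1 (mul_le_mul b2 b3 (norm_nonneg _) hC0) (by positivity)
              (by positivity)
      _ = C * (C * D) * (r ^ p.1 * s ^ p.2) := by ring
    · simp only [hG, if_neg (by omega : ¬ p.2 ≤ p.1 + m')]
      rw [norm_zero]
      exact hK0
  have step1 : ∀ j, star (betaC a j) * (cprod (betaC a) c) (j + m') = ∑' m, G (j, m) := by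
    intro j
    have e1 : (cprod (betaC a) c) (j + m')
        = ∑ m ∈ range (j + m' + 1), betaC a (j + m' - m) * c m := by
      rw [show (cprod (betaC a) c) (j + m')
          = ∑ k ∈ range (j + m' + 1), betaC a k * c (j + m' - k) from rfl]
      rw [← Finset.sum_range_reflect]
      refine Finset.sum_congr rfl fun m hm => ?_
      have hm' : m ≤ j + m' := by
        have := Finset.mem_range.mp hm; omega
      have e2 : j + m' + 1 - 1 - m = j + m' - m := by omega
      have e3 : j + m' - (j + m' - m) = m := by omega
      rw [e2, e3]
    rw [e1, mul_sum]
    have e4 : ∀ m ∈ range (j + m' + 1),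
        star (betaC a j) * (betaC a (j + m' - m) * c m) = G (j, m) := by
      intro m hm
      have hm' : m ≤ j + m' := by
        have := Finset.mem_range.mp hm; omega
      simp only [hG, if_pos hm']
    rw [Finset.sum_congr rfl e4]
    refine (tsum_eq_sum fun m hm => ?_).symm
    have hm' : ¬ m ≤ j + m' := by
      have := Finset.mem_range.not.mp hm; omega
    simp only [hG, if_neg hm']
  have step3 : ∀ m, ∑' j, G (j, m) = if m = m' then c m' else 0 := by
    intro m
    rcases le_or_gt m m' with hle | hlt
    · have e : ∀ j, G (j, m) = (star (betaC a j) * betaC a (j + (m' - m))) * c m := by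
        intro j
        simp only [hG, if_pos (by omega : m ≤ j + m')]
        rw [show j + m' - m = j + (m' - m) from by omega, mul_assoc]
      rw [tsum_congr e, tsum_mul_right, Sbeta' ha (m' - m)]
      by_cases hmm : m = m'
      · subst hmm
        rw [if_pos (by omega), one_mul, if_pos rfl]
      · rw [if_neg (by omega), zero_mul, if_neg hmm]
    · rw [if_neg (by omega)]
      have hzero : ∀ n, n < m - m' → G (n, m) = 0 := by
        intro n hn
        simp only [hG, if_neg (by omega : ¬ m ≤ n + m')]
      rw [tsum_shift (fun j => G (j, m)) (m - m') hzero]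
      have e : ∀ t, G (t + (m - m'), m) = (star (betaC a (t + (m - m'))) * betaC a t) * c m := by
        intro t
        simp only [hG, if_pos (by omega : m ≤ t + (m - m') + m')]
        rw [show t + (m - m') + m' - m = t from by omega, mul_assoc]
      rw [tsum_congr e, tsum_mul_right, Sbeta ha (m - m'), if_neg (by omega), zero_mul]
  have step2 : ∑' j, ∑' m, G (j, m) = ∑' m, ∑' j, G (j, m) := by
    have hu : Summable (Function.uncurry fun j m => G (j, m)) := by
      exact hGsum
    exact (Summable.tsum_comm hu).symm
  rw [tsum_congr step1, step2, tsum_congr step3]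
  exact tsum_ite_eq m' (fun _ => c m')

lemma ortho_step {a : ℍ} (ha : ‖a‖ < 1) {c : ℕ → ℍ} (hc : GD c) :
    ∑' n, star (eps a n) * (cprod (betaC a) c) n = 0 := by
  obtain ⟨r, C, hr0, hr1, hC0, hCb⟩ := gd_beta ha
  obtain ⟨s, D, hs0, hs1, hD0, hD⟩ := hc
  set F : ℕ × ℕ → ℍ := fun p => star (eps a (p.1 + p.2)) * (betaC a p.1 * c p.2) with hF
  have hFsum : Summable F := by
    apply summable_geom_bound2 (K := C * D) hr0 hr1 hs0 hs1
    intro p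
    simp only [hF]
    rw [norm_mul, norm_star, norm_mul]
    have b0 : ‖eps a (p.1 + p.2)‖ ≤ 1 := eps_norm_le_one ha _
    have b1 : ‖betaC a p.1‖ ≤ C * r ^ p.1 := hCb _
    have b3 : ‖c p.2‖ ≤ D * s ^ p.2 := hD _
    calc ‖eps a (p.1 + p.2)‖ * (‖betaC a p.1‖ * ‖c p.2‖)
        ≤ 1 * ((C * r ^ p.1) * (D * s ^ p.2)) := by
          refine mul_le_mul b0 (mul_le_mul b1 b3 (norm_nonneg _) (by positivity)) (by positivity)
            (by norm_num)
    _ = C * D * (r ^ p.1 * s ^ p.2) := by ring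
  have hpt : ∀ n, star (eps a n) * (cprod (betaC a) c) n = ∑ k ∈ range (n + 1), F (k, n - k) := by
    intro n
    rw [show (cprod (betaC a) c) n = ∑ k ∈ range (n + 1), betaC a k * c (n - k) from rfl, mul_sum]
    refine Finset.sum_congr rfl fun k hk => ?_
    have hk' : k ≤ n := by
      have := Finset.mem_range.mp hk; omega
    simp only [hF]
    rw [Nat.add_sub_cancel' hk']
  calc ∑' n, star (eps a n) * (cprod (betaC a) c) n
      = ∑' n, ∑ k ∈ range (n + 1), F (k, n - k) := tsum_congr hpt
  _ = ∑' p : ℕ × ℕ, F p := (tsum_prod_range F hFsum).symm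
  _ = ∑' p : ℕ × ℕ, F p.swap := ((Equiv.prodComm ℕ ℕ).tsum_eq F).symm
  _ = ∑' m, ∑' k, F (k, m) := by
      rw [Summable.tsum_prod hFsum.prod_symm]
      simp only [Prod.swap_prod_mk]
  _ = ∑' m, (∑' k, star (eps a (k + m)) * betaC a k) * c m := by
      refine tsum_congr fun m => ?_
      refine (tsum_congr fun k => ?_).trans tsum_mul_right
      simp only [hF]
      rw [mul_assoc]
  _ = 0 := by
      rw [tsum_congr fun m => by rw [Ebeta ha m, zero_mul]]
      exact tsum_zero

lemma isometry_step {a : ℍ} (ha : ‖a‖ < 1) {c d : ℕ → ℍ} (hc : GD c) (hd : GD d) :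
    ∑' n, star ((cprod (betaC a) d) n) * (cprod (betaC a) c) n = ∑' n, star (d n) * c n := by
  obtain ⟨r, C, hr0, hr1, hC0, hCb⟩ := gd_beta ha
  obtain ⟨s, D, hs0, hs1, hD0, hDd⟩ := hd
  obtain ⟨u, E, hu0, hu1, hE0, hE⟩ := gd_cprod (gd_beta ha) hc
  set F : ℕ × ℕ → ℍ := fun p =>
    star (betaC a p.1 * d p.2) * (cprod (betaC a) c) (p.1 + p.2) with hF
  have hFsum : Summable F := by
    apply summable_geom_bound2 (K := C * D * E) hr0 hr1 hs0 hs1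
    intro p
    simp only [hF]
    rw [norm_mul, norm_star, norm_mul]
    have b1 : ‖betaC a p.1‖ ≤ C * r ^ p.1 := hCb _
    have b2 : ‖d p.2‖ ≤ D * s ^ p.2 := hDd _
    have b3 : ‖(cprod (betaC a) c) (p.1 + p.2)‖ ≤ E := (hE _).trans (by
      nlinarith [pow_le_one₀ hu0 hu1.le (n := p.1 + p.2)])
    calc ‖betaC a p.1‖ * ‖d p.2‖ * ‖(cprod (betaC a) c) (p.1 + p.2)‖
        ≤ ((C * r ^ p.1) * (D * s ^ p.2)) * E := by
          refine mul_le_mul (mul_le_mul b1 b2 (norm_nonneg _) (by positivity)) b3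
            (norm_nonneg _) (by positivity)
    _ = C * D * E * (r ^ p.1 * s ^ p.2) := by ring
  have hpt : ∀ n, star ((cprod (betaC a) d) n) * (cprod (betaC a) c) n
      = ∑ k ∈ range (n + 1), F (k, n - k) := by
    intro n
    rw [show (cprod (betaC a) d) n = ∑ k ∈ range (n + 1), betaC a k * d (n - k) from rfl,
      star_sum, sum_mul]
    refine Finset.sum_congr rfl fun k hk => ?_
    have hk' : k ≤ n := by
      have := Finset.mem_range.mp hk; omega
    simp only [hF]
    rw [Nat.add_sub_cancel' hk']
  calc ∑' n, star ((cprod (betaC a) d) n) * (cprod (betaC a) c) n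
      = ∑' n, ∑ k ∈ range (n + 1), F (k, n - k) := tsum_congr hpt
  _ = ∑' p : ℕ × ℕ, F p := (tsum_prod_range F hFsum).symm
  _ = ∑' p : ℕ × ℕ, F p.swap := ((Equiv.prodComm ℕ ℕ).tsum_eq F).symm
  _ = ∑' m, ∑' k, F (k, m) := by
      rw [Summable.tsum_prod hFsum.prod_symm]
      simp only [Prod.swap_prod_mk]
  _ = ∑' m, star (d m) * c m := by
      refine tsum_congr fun m => ?_
      have e : ∀ k, F (k, m)
          = star (d m) * (star (betaC a k) * (cprod (betaC a) c) (k + m)) := by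
        intro k
        simp only [hF]
        rw [star_mul, mul_assoc]
      calc ∑' k, F (k, m)
          = ∑' k, star (d m) * (star (betaC a k) * (cprod (betaC a) c) (k + m)) :=
            tsum_congr e
      _ = star (d m) * ∑' k, star (betaC a k) * (cprod (betaC a) c) (k + m) := tsum_mul_left
      _ = star (d m) * c m := by rw [Hkey ha hc m]

lemma mk_cprod (b c : ℕ → ℍ) :
    PowerSeries.mk (cprod b c) = PowerSeries.mk b * PowerSeries.mk c := by
  refine PowerSeries.ext fun n => ?_
  rw [PowerSeries.coeff_mk, PowerSeries.coeff_mul,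
    Finset.Nat.sum_antidiagonal_eq_sum_range_succ_mk]
  simp only [PowerSeries.coeff_mk]
  rfl

lemma mk_injective : Function.Injective (PowerSeries.mk : (ℕ → ℍ) → PowerSeries ℍ) := by
  intro x y h
  funext n
  have := congrArg (PowerSeries.coeff n) h
  simpa using this

lemma mk_delta : PowerSeries.mk deltaSeq = 1 := by
  refine PowerSeries.ext fun n => ?_
  rw [PowerSeries.coeff_mk, PowerSeries.coeff_one]
  rfl

lemma cprod_assoc (b c d : ℕ → ℍ) : cprod (cprod b c) d = cprod b (cprod c d) :=
  mk_injective (by rw [mk_cprod, mk_cprod, mk_cprod, mk_cprod, mul_assoc])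

lemma cprod_delta_left (c : ℕ → ℍ) : cprod deltaSeq c = c :=
  mk_injective (by rw [mk_cprod, mk_delta, one_mul])

lemma cprod_delta_right (c : ℕ → ℍ) : cprod c deltaSeq = c :=
  mk_injective (by rw [mk_cprod, mk_delta, mul_one])

lemma Bprod_shift (a : ℕ → ℍ) (k : ℕ) :
    Bprod a (k + 1) = cprod (betaC (a 0)) (Bprod (a ∘ Nat.succ) k) := by
  induction k with
  | zero =>
      show cprod deltaSeq (betaC (a 0)) = cprod (betaC (a 0)) deltaSeq
      rw [cprod_delta_left, cprod_delta_right]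
  | succ k ih =>
      show cprod (Bprod a (k + 1)) (betaC (a (k + 1)))
          = cprod (betaC (a 0)) (cprod (Bprod (a ∘ Nat.succ) k) (betaC ((a ∘ Nat.succ) k)))
      rw [ih, cprod_assoc]
      rfl

lemma tau_zero (a : ℕ → ℍ) : tau a 0 = eps (a 0) := by
  show cprod deltaSeq (eps (a 0)) = _
  rw [cprod_delta_left]

lemma tau_succ (a : ℕ → ℍ) (k : ℕ) :
    tau a (k + 1) = cprod (betaC (a 0)) (tau (a ∘ Nat.succ) k) := by
  show cprod (Bprod a (k + 1)) (eps (a (k + 1)))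
      = cprod (betaC (a 0)) (cprod (Bprod (a ∘ Nat.succ) k) (eps ((a ∘ Nat.succ) k)))
  rw [Bprod_shift, cprod_assoc]
  rfl

lemma gd_Bprod (a : ℕ → ℍ) (ha : ∀ i, ‖a i‖ < 1) (k : ℕ) : GD (Bprod a k) := by
  induction k with
  | zero => exact gd_delta
  | succ k ih => exact gd_cprod ih (gd_beta (ha k))

lemma gd_tau (a : ℕ → ℍ) (ha : ∀ i, ‖a i‖ < 1) (k : ℕ) : GD (tau a k) :=
  gd_cprod (gd_Bprod a ha k) (gd_eps (ha k))

lemma main_aux : ∀ (k : ℕ) (a : ℕ → ℍ), (∀ i, ‖a i‖ < 1) → ∀ l,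
    (∑' n, star (tau a l n) * tau a k n) = if k = l then 1 else 0 := by
  intro k
  induction k with
  | zero =>
      intro a ha l
      match l with
      | 0 =>
          rw [if_pos rfl, tau_zero]
          exact Neps (ha 0)
      | (l' + 1) =>
          rw [if_neg (by omega), tau_zero, tau_succ]
          have h := ortho_step (ha 0) (gd_tau (a ∘ Nat.succ) (fun i => ha (i + 1)) l')
          have h2 := congrArg star h
          rw [tsum_star] at h2
          simp only [star_mul, star_star, star_zero] at h2
          exact h2
  | succ k' ih =>
      intro a ha l
      match l with
      | 0 =>
          rw [if_neg (by omega), tau_zero, tau_succ]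
          exact ortho_step (ha 0) (gd_tau (a ∘ Nat.succ) (fun i => ha (i + 1)) k')
      | (l' + 1) =>
          rw [tau_succ, tau_succ,
            isometry_step (ha 0) (gd_tau (a ∘ Nat.succ) (fun i => ha (i + 1)) k')
              (gd_tau (a ∘ Nat.succ) (fun i => ha (i + 1)) l'),
            ih (a ∘ Nat.succ) (fun i => ha (i + 1)) l']
          by_cases hkl : k' = l' <;> simp [hkl]
/-- the slice Takenaka–Malmquist system is orthonormal in `ℓ²(ℕ, ℍ)`
(0-indexed: `tau a k` corresponds to `T_{k+1}`). -/
theorem tm_orthonormal (a : ℕ → ℍ) (ha : ∀ k, ‖a k‖ < 1) (k l : ℕ) :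
    (∑' n, star (tau a l n) * tau a k n) = if k = l then 1 else 0 := by
  exact main_aux k a ha l
end
end
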